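/- For discrete distributions P and Q on a finite alphabet X, the Chernoff information C(P,Q) = -min_{λ∈[0,1]} log(Σ_x P(x)^λ Q(x)^{1-λ}) satisfies C(P,Q) ≥ -(1/2)·ln(1 - V(P,Q)²), where V(P,Q) = (1/2)Σ_x |P(x)-Q(x)| is the total variation distance. -/
import Mathlib


open Finset

/-- Chernoff information with base-2 logarithm. -/
noncomputable def chernoff {α : Type*} [Fintype α] (P Q : α → ℝ) : ℝ :=
  - sInf ((fun l : ℝ => Real.logb 2 (∑ x, P x ^ l * Q x ^ (1 - l))) '' Set.Icc (0:ℝ) 1)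

/-- Total variation distance. -/
noncomputable def tv {α : Type*} [Fintype α] (P Q : α → ℝ) : ℝ :=
  (1/2) * ∑ x, |P x - Q x|

theorem stmt0 {α : Type*} [Fintype α] (P Q : α → ℝ)
    (hP0 : ∀ x, 0 ≤ P x) (hP1 : ∑ x, P x = 1)
    (hQ0 : ∀ x, 0 ≤ Q x) (hQ1 : ∑ x, Q x = 1) :
    chernoff P Q ≥ -(1/2) * Real.log (1 - tv P Q ^ 2) := by
  set V := tv P Q with hV
  -- sum of mins and maxes
  have hmm : ∀ x, min (P x) (Q x) + max (P x) (Q x) = P x + Q x := fun x => min_add_max _ _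
  have hms : ∀ x, max (P x) (Q x) - min (P x) (Q x) = |P x - Q x| := by
    intro x; rw [max_sub_min_eq_abs, abs_sub_comm]
  have hsum_min : ∑ x, min (P x) (Q x) = 1 - V := by
    have h1 : ∑ x, (min (P x) (Q x) + max (P x) (Q x)) = 2 := by
      simp only [hmm]; rw [Finset.sum_add_distrib, hP1, hQ1]; norm_num
    have h2 : ∑ x, (max (P x) (Q x) - min (P x) (Q x)) = 2 * V := by
      simp only [hms]; rw [hV, tv]; ring
    rw [Finset.sum_add_distrib] at h1
    rw [Finset.sum_sub_distrib] at h2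
    linarith
  have hsum_max : ∑ x, max (P x) (Q x) = 1 + V := by
    have h1 : ∑ x, (min (P x) (Q x) + max (P x) (Q x)) = 2 := by
      simp only [hmm]; rw [Finset.sum_add_distrib, hP1, hQ1]; norm_num
    rw [Finset.sum_add_distrib, hsum_min] at h1
    linarith
  have hV0 : 0 ≤ V := by
    rw [hV, tv]
    have : (0:ℝ) ≤ ∑ x, |P x - Q x| := Finset.sum_nonneg fun x _ => abs_nonneg _
    linarith
  have hV1 : V ≤ 1 := by
    have : (0:ℝ) ≤ ∑ x, min (P x) (Q x) :=
      Finset.sum_nonneg fun x _ => le_min (hP0 x) (hQ0 x)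
    linarith [hsum_min]
  rw [chernoff, ge_iff_le, neg_mul, neg_le_neg_iff]
  rcases eq_or_lt_of_le hV1 with hVeq | hVlt
  · -- V = 1 : RHS is 0 since log 0 = 0
    have : 1 - V ^ 2 = 0 := by rw [hVeq]; norm_num
    rw [this, Real.log_zero, mul_zero]
    apply Real.sInf_nonpos
    rintro y ⟨l, hl, rfl⟩
    obtain ⟨hl0, hl1⟩ := hl
    apply Real.logb_nonpos one_lt_two
    · exact Finset.sum_nonneg fun x _ =>
        mul_nonneg (Real.rpow_nonneg (hP0 x) _) (Real.rpow_nonneg (hQ0 x) _)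
    · calc ∑ x, P x ^ l * Q x ^ (1 - l)
          ≤ ∑ x, (l * P x + (1 - l) * Q x) := by
            apply Finset.sum_le_sum
            intro x _
            exact Real.geom_mean_le_arith_mean2_weighted hl0 (by linarith) (hP0 x) (hQ0 x)
              (by ring)
        _ = 1 := by
            rw [Finset.sum_add_distrib, ← Finset.mul_sum, ← Finset.mul_sum, hP1, hQ1]; ring
  · -- V < 1
    have h1V : (0:ℝ) < 1 - V := by linarith
    -- lower bound on each sum
    have hlow : ∀ l ∈ Set.Icc (0:ℝ) 1, 1 - V ≤ ∑ x, P x ^ l * Q x ^ (1 - l) := by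
      rintro l ⟨hl0, hl1⟩
      rw [← hsum_min]
      apply Finset.sum_le_sum
      intro x _
      rcases eq_or_lt_of_le (le_min (hP0 x) (hQ0 x)) with hm | hm
      · rw [← hm]
        exact mul_nonneg (Real.rpow_nonneg (hP0 x) _) (Real.rpow_nonneg (hQ0 x) _)
      · have h1 : min (P x) (Q x) ^ l ≤ P x ^ l :=
          Real.rpow_le_rpow (le_of_lt hm) (min_le_left _ _) hl0
        have h2 : min (P x) (Q x) ^ (1 - l) ≤ Q x ^ (1 - l) :=
          Real.rpow_le_rpow (le_of_lt hm) (min_le_right _ _) (by linarith)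
        calc min (P x) (Q x) = min (P x) (Q x) ^ l * min (P x) (Q x) ^ (1 - l) := by
              rw [← Real.rpow_add hm]; norm_num
          _ ≤ P x ^ l * Q x ^ (1 - l) := by
              apply mul_le_mul h1 h2 (Real.rpow_nonneg (le_min (hP0 x) (hQ0 x)) _)
                (Real.rpow_nonneg (hP0 x) _)
    -- bounded below
    have hbdd : BddBelow ((fun l : ℝ => Real.logb 2 (∑ x, P x ^ l * Q x ^ (1 - l))) ''
        Set.Icc (0:ℝ) 1) := by
      refine ⟨Real.logb 2 (1 - V), ?_⟩
      rintro y ⟨l, hl, rfl⟩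
      exact (Real.logb_le_logb one_lt_two h1V (lt_of_lt_of_le h1V (hlow l hl))).2 (hlow l hl)
    -- sInf ≤ value at 1/2
    have hmem : Real.logb 2 (∑ x, P x ^ (1/2 : ℝ) * Q x ^ (1 - (1/2:ℝ))) ∈
        ((fun l : ℝ => Real.logb 2 (∑ x, P x ^ l * Q x ^ (1 - l))) '' Set.Icc (0:ℝ) 1) :=
      ⟨1/2, by norm_num, rfl⟩
    have hinf := csInf_le hbdd hmem
    set B := ∑ x, P x ^ (1/2 : ℝ) * Q x ^ (1 - (1/2:ℝ)) with hB
    have hBlow : 1 - V ≤ B := hlow (1/2) (by norm_num)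
    have hBpos : 0 < B := lt_of_lt_of_le h1V hBlow
    -- Cauchy–Schwarz : B^2 ≤ (1-V)(1+V)
    have hBsq : B ^ 2 ≤ (1 - V) * (1 + V) := by
      have hrw : B = ∑ x, Real.sqrt (min (P x) (Q x)) * Real.sqrt (max (P x) (Q x)) := by
        rw [hB]
        apply Finset.sum_congr rfl
        intro x _
        rw [show (1 - (1/2:ℝ)) = 1/2 by norm_num, ← Real.sqrt_eq_rpow, ← Real.sqrt_eq_rpow,
          ← Real.sqrt_mul (hP0 x), ← min_mul_max (P x) (Q x),
          Real.sqrt_mul (le_min (hP0 x) (hQ0 x))]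
      rw [hrw, ← hsum_min, ← hsum_max]
      calc (∑ x, Real.sqrt (min (P x) (Q x)) * Real.sqrt (max (P x) (Q x))) ^ 2
          ≤ (∑ x, Real.sqrt (min (P x) (Q x)) ^ 2) * ∑ x, Real.sqrt (max (P x) (Q x)) ^ 2 :=
            Finset.sum_mul_sq_le_sq_mul_sq _ _ _
        _ = (∑ x, min (P x) (Q x)) * ∑ x, max (P x) (Q x) := by
            congr 1 <;> apply Finset.sum_congr rfl <;> intro x _
            · exact Real.sq_sqrt (le_min (hP0 x) (hQ0 x))
            · exact Real.sq_sqrt (le_max_of_le_left (hP0 x))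
      -- note: le_max_of_le_left wrong; fixed below if error
    have hV2 : (0:ℝ) < 1 - V ^ 2 := by nlinarith
    -- ln B ≤ (1/2) ln (1 - V^2)
    have hlogB : Real.log B ≤ 1/2 * Real.log (1 - V ^ 2) := by
      have h2 : Real.log (B ^ 2) ≤ Real.log (1 - V ^ 2) := by
        apply Real.log_le_log (by positivity)
        calc B ^ 2 ≤ (1 - V) * (1 + V) := hBsq
          _ = 1 - V ^ 2 := by ring
      rw [Real.log_pow] at h2
      push_cast at h2
      linarith
    have hlogBneg : Real.log B ≤ 0 := by
      have : Real.log (1 - V ^ 2) ≤ 0 := Real.log_nonpos (by linarith) (by nlinarith)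
      linarith
    -- conclude
    calc sInf _ ≤ Real.logb 2 B := hinf
      _ = Real.log B / Real.log 2 := rfl
      _ ≤ Real.log B := by
          have hl2 : 0 < Real.log 2 := Real.log_pos one_lt_two
          have hl2' : Real.log 2 < 1 := by
            have := Real.log_two_lt_d9; linarith
          rw [div_le_iff₀ hl2]
          nlinarith
      _ ≤ 1/2 * Real.log (1 - V ^ 2) := hlogB
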